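/- Closed-form iterated Gaussian mean learning: fix σ > 0, ξ > 0, δ : ℝ, and define the Bayesian update step upd (y : ℝ) (p : Measure ℝ) as the normalization of p.withDensity (fun r => ENNReal.ofReal (Real.exp (−(r − y)²/(2σ²)))). Then for every list L : List ℝ with n = L.length and S = L.sum, folding the updates over L starting from the prior gaussianReal δ ξ² yields L.foldr upd (gaussianReal δ ξ²) = gaussianReal ((S·ξ² + δ·σ²)/(n·ξ² + σ²)) ((ξ²·σ²)/(n·ξ² + σ²)). -/

import Mathlib

open MeasureTheory ProbabilityTheory Real
open scoped NNReal ENNReal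

lemma gauss_step (σ : ℝ) (hσ : 0 < σ) (m y : ℝ) (v v' : ℝ≥0) (hv : v ≠ 0)
    (hv' : (v' : ℝ) = v * σ ^ 2 / (v + σ ^ 2)) (m' : ℝ)
    (hm' : m' = (y * v + m * σ ^ 2) / (v + σ ^ 2)) :
    (let q := (gaussianReal m v).withDensity
        (fun r => ENNReal.ofReal (Real.exp (-(r - y) ^ 2 / (2 * σ ^ 2))));
      (q Set.univ)⁻¹ • q) = gaussianReal m' v' := by
  have hvpos : (0:ℝ) < v := lt_of_le_of_ne v.coe_nonneg (by exact_mod_cast (Ne.symm hv))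
  have hσ2 : (0:ℝ) < σ ^ 2 := by positivity
  have hden : (0:ℝ) < (v:ℝ) + σ ^ 2 := by positivity
  have hv'pos : (0:ℝ) < v' := by rw [hv']; positivity
  have hv'ne : v' ≠ 0 := by exact_mod_cast hv'pos.ne'
  set C : ℝ := Real.sqrt ((v' : ℝ) / v) * Real.exp (-(y - m) ^ 2 / (2 * ((v:ℝ) + σ ^ 2))) with hC
  have hCpos : 0 < C := by
    apply mul_pos
    · exact Real.sqrt_pos.mpr (by positivity)
    · exact Real.exp_pos _
  have hs : Real.sqrt ((v':ℝ)/v) * (Real.sqrt (2*π*v'))⁻¹ = (Real.sqrt (2*π*v))⁻¹ := by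
    rw [← Real.sqrt_inv, ← Real.sqrt_mul (by positivity), ← Real.sqrt_inv]
    congr 1
    have hπ : (0:ℝ) < π := Real.pi_pos
    field_simp
  have key : ∀ r : ℝ, gaussianPDFReal m v r * Real.exp (-(r - y) ^ 2 / (2 * σ ^ 2))
      = C * gaussianPDFReal m' v' r := by
    intro r
    have hexp : -(r - m) ^ 2 / (2 * (v:ℝ)) + -(r - y) ^ 2 / (2 * σ ^ 2)
        = -(y - m) ^ 2 / (2 * ((v:ℝ) + σ ^ 2)) + -(r - m') ^ 2 / (2 * (v':ℝ)) := by
      rw [hv', hm']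
      field_simp
      ring
    simp only [gaussianPDFReal, hC]
    rw [mul_assoc, ← Real.exp_add, hexp, Real.exp_add, ← hs]
    ring
  have hfm : Measurable (fun r : ℝ => ENNReal.ofReal (Real.exp (-(r - y) ^ 2 / (2 * σ ^ 2)))) := by
    fun_prop
  have hq : (gaussianReal m v).withDensity
      (fun r => ENNReal.ofReal (Real.exp (-(r - y) ^ 2 / (2 * σ ^ 2))))
      = ENNReal.ofReal C • gaussianReal m' v' := by
    rw [gaussianReal_of_var_ne_zero _ hv, ← withDensity_mul _ (measurable_gaussianPDF _ _) hfm,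
      gaussianReal_of_var_ne_zero _ hv'ne, ← withDensity_smul _ (measurable_gaussianPDF m' v')]
    congr 1
    ext r
    simp only [Pi.mul_apply, Pi.smul_apply, gaussianPDF, smul_eq_mul]
    rw [← ENNReal.ofReal_mul (gaussianPDFReal_nonneg _ _ _), key r,
      ENNReal.ofReal_mul hCpos.le]
  simp only
  rw [hq]
  have huniv : (ENNReal.ofReal C • gaussianReal m' v') Set.univ = ENNReal.ofReal C := by
    simp [measure_univ]
  rw [huniv, smul_smul, ENNReal.inv_mul_cancel (ENNReal.ofReal_pos.mpr hCpos).ne'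
    ENNReal.ofReal_ne_top, one_smul]

theorem gaussian_mean_learning_closed_form
    (σ ξ : ℝ≥0) (hσ : 0 < σ) (hξ : 0 < ξ) (δ : ℝ) (L : List ℝ) :
    L.foldr
      (fun (y : ℝ) (p : Measure ℝ) =>
        let q : Measure ℝ :=
          p.withDensity (fun r => ENNReal.ofReal (Real.exp (-(r - y) ^ 2 / (2 * (σ : ℝ) ^ 2))))
        (q Set.univ)⁻¹ • q)
      (gaussianReal δ (ξ ^ 2)) =
    gaussianReal
      ((L.sum * (ξ : ℝ) ^ 2 + δ * (σ : ℝ) ^ 2) / ((L.length : ℝ) * (ξ : ℝ) ^ 2 + (σ : ℝ) ^ 2))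
      ((ξ ^ 2 * σ ^ 2) / ((L.length : ℝ≥0) * ξ ^ 2 + σ ^ 2)) := by
  have hσR : (0:ℝ) < σ := hσ
  have hξR : (0:ℝ) < ξ := hξ
  induction L with
  | nil =>
    simp only [List.foldr_nil, List.sum_nil, List.length_nil, Nat.cast_zero, zero_mul, zero_add]
    congr 1
    · field_simp
    · rw [mul_div_assoc, div_self (by positivity), mul_one]
  | cons y T ih =>
    rw [List.foldr_cons, ih]
    have hdenT : (0:ℝ) < (T.length : ℝ) * (ξ:ℝ) ^ 2 + (σ:ℝ) ^ 2 := by positivity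
    have hdenL : (0:ℝ) < ((T.length : ℝ) + 1) * (ξ:ℝ) ^ 2 + (σ:ℝ) ^ 2 := by positivity
    have hVT : (((ξ ^ 2 * σ ^ 2) / ((T.length : ℝ≥0) * ξ ^ 2 + σ ^ 2) : ℝ≥0) : ℝ)
        = (ξ:ℝ) ^ 2 * (σ:ℝ) ^ 2 / ((T.length : ℝ) * (ξ:ℝ) ^ 2 + (σ:ℝ) ^ 2) := by
      push_cast
      ring
    have hVL : ((((y :: T).length : ℝ≥0) * ξ ^ 2 + σ ^ 2 : ℝ≥0) : ℝ)
        = ((T.length : ℝ) + 1) * (ξ:ℝ) ^ 2 + (σ:ℝ) ^ 2 := by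
      push_cast [List.length_cons]
      ring
    refine gauss_step (σ:ℝ) hσR _ y _ _ ?_ ?_ _ ?_
    · intro h
      have : (((ξ ^ 2 * σ ^ 2) / ((T.length : ℝ≥0) * ξ ^ 2 + σ ^ 2) : ℝ≥0) : ℝ) = 0 := by
        rw [h]; simp
      rw [hVT] at this
      have : (0:ℝ) < (ξ:ℝ) ^ 2 * (σ:ℝ) ^ 2 / ((T.length : ℝ) * (ξ:ℝ) ^ 2 + (σ:ℝ) ^ 2) := by
        positivity
      linarith
    · rw [hVT]
      push_cast [hVT, List.length_cons]
      field_simp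
      ring
    · rw [List.sum_cons]
      push_cast [hVT, List.length_cons]
      rw [div_eq_div_iff (by positivity) (by positivity)]
      field_simp
      ring
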